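/- Let W = L_1 ... L_k be the Lyndon factorization of W and 1 ≤ l < k. Then the sorted list of all (global) suffixes of W whose starting positions lie in the prefix L_1...L_l, and the sorted list of those starting in L_{l+1}...L_k, can be merged (as sorted lists under lexicographic order of the corresponding global suffixes) to obtain the full sorted list of suffixes of W; equivalently, sorting positions in L_1...L_l by local suffix order and positions in L_{l+1}...L_k by local suffix order and merging by global suffix order yields the global suffix order on all positions. -/

import Mathlib

/-- A Lyndon word: nonempty and strictly lexicographically smaller than
every proper cyclic rotation. -/
def IsLyndon {α : Type*} [LinearOrder α] (l : List α) : Prop :=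
  l ≠ [] ∧ ∀ u v : List α, u ≠ [] → v ≠ [] → l = u ++ v → l < v ++ u


namespace MergeAux
variable {α : Type*} [LinearOrder α]

/-- `x` is less than `y` with the comparison decided at an actual position. -/
def LtS (x y : List α) : Prop :=
  ∃ (p : List α) (c d : α) (r s : List α), c < d ∧ x = p ++ c :: r ∧ y = p ++ d :: s

theorem LtS.append_lt {x y : List α} (h : LtS x y) (s t : List α) : x ++ s < y ++ t := by
  obtain ⟨p, c, d, r, q, hcd, rfl, rfl⟩ := h
  show List.Lex (· < ·) _ _
  rw [List.append_assoc, List.append_assoc, List.cons_append, List.cons_append]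
  exact List.Lex.append_left _ (List.Lex.rel hcd) p

theorem LtS.lt {x y : List α} (h : LtS x y) : x < y := by
  simpa using h.append_lt [] []

theorem LtS.cons {x y : List α} (a : α) (h : LtS x y) : LtS (a :: x) (a :: y) := by
  obtain ⟨p, c, d, r, q, hcd, rfl, rfl⟩ := h
  exact ⟨a :: p, c, d, r, q, hcd, rfl, rfl⟩

theorem trichotomy (x : List α) : ∀ y : List α,
    LtS x y ∨ LtS y x ∨ x <+: y ∨ y <+: x := by
  induction x with
  | nil => intro y; exact Or.inr (Or.inr (Or.inl (List.nil_prefix)))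
  | cons a x ih =>
    intro y
    cases y with
    | nil => exact Or.inr (Or.inr (Or.inr (List.nil_prefix)))
    | cons b y =>
      rcases lt_trichotomy a b with h | rfl | h
      · exact Or.inl ⟨[], a, b, x, y, h, rfl, rfl⟩
      · rcases ih y with h | h | h | h
        · exact Or.inl (h.cons a)
        · exact Or.inr (Or.inl (h.cons a))
        · exact Or.inr (Or.inr (Or.inl ((List.prefix_cons_inj a).2 h)))
        · exact Or.inr (Or.inr (Or.inr ((List.prefix_cons_inj a).2 h)))
      · exact Or.inr (Or.inl ⟨[], b, a, y, x, h, rfl, rfl⟩)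

theorem lt_append_of_ne_nil (x : List α) {t : List α} (ht : t ≠ []) : x < x ++ t := by
  show List.Lex (· < ·) _ _
  induction x with
  | nil =>
    cases t with
    | nil => exact absurd rfl ht
    | cons c t => exact List.Lex.nil
  | cons a x ih => exact List.Lex.cons ih

theorem prefix_le {x y : List α} (h : x <+: y) : x ≤ y := by
  obtain ⟨t, rfl⟩ := h
  rcases eq_or_ne t [] with rfl | ht
  · simp
  · exact le_of_lt (lt_append_of_ne_nil x ht)

theorem prefix_lt {x y : List α} (h : x <+: y) (hne : x ≠ y) : x < y := by
  obtain ⟨t, rfl⟩ := h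
  refine lt_append_of_ne_nil x fun h => hne (by simp [h])

theorem append_lt_append_left_iff (c : List α) {a b : List α} :
    c ++ a < c ++ b ↔ a < b := by
  show List.Lex (· < ·) _ _ ↔ List.Lex (· < ·) _ _
  induction c with
  | nil => simp
  | cons e c ih =>
    rw [List.cons_append, List.cons_append, List.cons_lex_cons_iff]
    simpa using ih

theorem append_le_append_left_iff (c : List α) {a b : List α} :
    c ++ a ≤ c ++ b ↔ a ≤ b := by
  rw [← not_lt, ← not_lt, append_lt_append_left_iff]

theorem lt_cases {x y : List α} (h : x < y) : LtS x y ∨ (x <+: y ∧ x ≠ y) := by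
  rcases trichotomy x y with h' | h' | h' | h'
  · exact Or.inl h'
  · exact absurd h'.lt (not_lt_of_gt h)
  · exact Or.inr ⟨h', ne_of_lt h⟩
  · exact absurd (prefix_le h') (not_le_of_gt h)


/-- A proper nonempty suffix of a Lyndon word beats it at an actual position. -/
theorem lyndon_suffix {L t : List α} (hL : IsLyndon L) (ht : t <:+ L)
    (htne : t ≠ []) (htL : t ≠ L) : LtS L t := by
  obtain ⟨p, rfl⟩ := ht
  have hp : p ≠ [] := by rintro rfl; exact htL (by simp)
  have h1 : p ++ t < t ++ p := hL.2 p t hp htne rfl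
  rcases trichotomy (p ++ t) t with h | h | h | h
  · exact h
  · exact absurd (lt_trans h1 (h.append_lt p [] |>.trans_eq (by simp))) (lt_irrefl _)
  · -- p ++ t <+: t : length contradiction
    have := h.length_le
    simp at this
    exact absurd this hp
  · -- t <+: p ++ t : t is a prefix; L = t ++ q
    obtain ⟨q, hq⟩ := h
    have hq' : q ≠ [] := by
      rintro rfl
      apply hp
      have : (p ++ t).length = t.length := by rw [← hq]; simp
      simp at this
      exact this
    have h2 : p ++ t < q ++ t := hL.2 t q htne hq' hq.symm
    -- from h1 and hq : t ++ q = p ++ t, get q < p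
    have h3 : q < p := by
      have : t ++ q < t ++ p := by rw [hq]; exact h1
      exact (append_lt_append_left_iff t).1 this
    have hlen : p.length = q.length := by
      have : (t ++ q).length = (p ++ t).length := by rw [hq]
      simp at this; omega
    rcases trichotomy p q with h' | h' | h' | h'
    · exact absurd (lt_trans h'.lt h3) (lt_irrefl _)
    · exact absurd (lt_trans (h'.append_lt t t) h2) (lt_irrefl _)
    · rw [h'.eq_of_length hlen] at h3; exact absurd h3 (lt_irrefl _)
    · rw [h'.eq_of_length hlen.symm] at h3; exact absurd h3 (lt_irrefl _)

/-- Key lemma: a chain product `v` dominated by a Lyndon word `L` satisfies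
`v < L ++ X` for any `X ≥ v`. -/
theorem main_lemma : ∀ (C : List (List α)), (∀ c ∈ C, IsLyndon c) →
    C.Pairwise (· ≥ ·) → ∀ L X : List α, IsLyndon L → (∀ c ∈ C, c ≤ L) →
    C.flatten ≤ X → C.flatten < L ++ X := by
  intro C
  induction C with
  | nil =>
    intro _ _ L X hL _ _
    simp only [List.flatten_nil]
    obtain ⟨a, L', rfl⟩ := List.exists_cons_of_ne_nil hL.1
    exact List.nil_lt_cons a _
  | cons m C' ih =>
    intro hLy hchain L X hL hle hX
    simp only [List.flatten_cons] at *
    have hm : IsLyndon m := hLy m (by simp)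
    have hmL : m ≤ L := hle m (by simp)
    have hC' : ∀ c ∈ C', IsLyndon c := fun c hc => hLy c (by simp [hc])
    have hchain' : C'.Pairwise (· ≥ ·) := hchain.tail
    have hdom : ∀ c ∈ C', c ≤ m := fun c hc => List.rel_of_pairwise_cons hchain hc
    have hv' : C'.flatten < m ++ C'.flatten :=
      ih hC' hchain' m C'.flatten hm hdom le_rfl
    rcases eq_or_lt_of_le hmL with rfl | hlt
    · -- m = L
      rw [append_lt_append_left_iff m]
      exact lt_of_lt_of_le hv' hX
    · rcases lt_cases hlt with h | ⟨hpre, hne⟩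
      · exact h.append_lt _ _
      · -- m proper prefix of L
        obtain ⟨L₂, rfl⟩ := hpre
        have hL₂ : L₂ ≠ [] := by rintro rfl; exact hne (by simp)
        have hsuf : L₂ <:+ m ++ L₂ := ⟨m, rfl⟩
        have hL₂ne : L₂ ≠ m ++ L₂ := by
          intro h
          have := congrArg List.length h
          simp at this
          exact hm.1 this
        have hLtS : LtS (m ++ L₂) L₂ := lyndon_suffix hL hsuf hL₂ hL₂ne
        have step : (m ++ L₂) ++ C'.flatten < L₂ ++ X := hLtS.append_lt _ _
        have hv2 : C'.flatten < (m ++ L₂) ++ C'.flatten :=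
          ih hC' hchain' (m ++ L₂) C'.flatten hL
            (fun c hc => le_trans (hdom c hc) hmL) le_rfl
        calc m ++ C'.flatten < m ++ (L₂ ++ X) := by
              rw [append_lt_append_left_iff m]
              exact lt_trans hv2 step
          _ = (m ++ L₂) ++ X := by rw [List.append_assoc]


/-- `v < P.flatten ++ v` for a nonempty chain `P` dominating `C`. -/
theorem flatten_front (C : List (List α)) (hCLy : ∀ c ∈ C, IsLyndon c)
    (hCchain : C.Pairwise (· ≥ ·)) :
    ∀ (P : List (List α)), P ≠ [] → (∀ p ∈ P, IsLyndon p) →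
      (∀ p ∈ P, ∀ c ∈ C, c ≤ p) → C.flatten < P.flatten ++ C.flatten := by
  intro P
  induction P with
  | nil => intro h; exact absurd rfl h
  | cons L P' ih =>
    intro _ hPLy hcross
    have hL : IsLyndon L := hPLy L (by simp)
    have hdom : ∀ c ∈ C, c ≤ L := hcross L (by simp)
    rcases eq_or_ne P' [] with rfl | hP'
    · simpa using main_lemma C hCLy hCchain L C.flatten hL hdom le_rfl
    · have hX : C.flatten < P'.flatten ++ C.flatten :=
        ih hP' (fun p hp => hPLy p (by simp [hp])) (fun p hp => hcross p (by simp [hp]))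
      have := main_lemma C hCLy hCchain L (P'.flatten ++ C.flatten) hL hdom (le_of_lt hX)
      simpa [List.append_assoc] using this

/-- Every nonempty suffix `z` of the chain product `A.flatten` satisfies
`v < z ++ v` where `v = C.flatten` is a chain product dominated by `A`. -/
theorem suffix_lt (C : List (List α)) (hCLy : ∀ c ∈ C, IsLyndon c)
    (hCchain : C.Pairwise (· ≥ ·)) :
    ∀ (A : List (List α)), (∀ a ∈ A, IsLyndon a) → A.Pairwise (· ≥ ·) →
      (∀ a ∈ A, ∀ c ∈ C, c ≤ a) →
      ∀ z : List α, z <:+ A.flatten → z ≠ [] → C.flatten < z ++ C.flatten := by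
  intro A
  induction A with
  | nil =>
    intro _ _ _ z hz hzne
    rw [List.flatten_nil, List.suffix_nil] at hz
    exact absurd hz hzne
  | cons L A' ih =>
    intro hALy hAchain hcross z hz hzne
    rw [List.flatten_cons] at hz
    have hL : IsLyndon L := hALy L (by simp)
    rcases le_or_gt z.length A'.flatten.length with hlen | hlen
    · exact ih (fun a ha => hALy a (by simp [ha])) hAchain.tail
        (fun a ha => hcross a (by simp [ha])) z
        (List.suffix_of_suffix_length_le hz (List.suffix_append L A'.flatten) hlen) hzne
    · -- z = t ++ A'.flatten with t a nonempty suffix of L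
      obtain ⟨w, hw⟩ := hz
      have hwlen : w.length ≤ L.length := by
        have := congrArg List.length hw
        rw [List.length_append, List.length_append] at this
        omega
      have hwpre : w <+: L := by
        have : w = (L ++ A'.flatten).take w.length := by rw [← hw]; simp
        rw [List.take_append_of_le_length hwlen] at this
        rw [this]; exact List.take_prefix _ _
      obtain ⟨t, hwL⟩ := hwpre
      have hzt : z = t ++ A'.flatten := by
        apply List.append_cancel_left (as := w)
        rw [hw, ← List.append_assoc, hwL]
      have htsuf : t <:+ L := ⟨w, hwL⟩
      have htne : t ≠ [] := by
        intro h
        have : z.length = A'.flatten.length := by rw [hzt, h]; simp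
        omega
      rcases eq_or_ne t L with rfl | htL
      · -- z ++ v = (L :: A').flatten ++ v
        rw [hzt, List.append_assoc]
        have := flatten_front C hCLy hCchain (t :: A') (by simp) hALy hcross
        simpa [List.append_assoc] using this
      · have hLtS : LtS L t := lyndon_suffix hL htsuf htne htL
        have h1 : C.flatten < L ++ C.flatten :=
          main_lemma C hCLy hCchain L C.flatten hL (hcross L (by simp)) le_rfl
        have h2 : L ++ C.flatten < t ++ (A'.flatten ++ C.flatten) := hLtS.append_lt _ _
        rw [hzt, List.append_assoc]
        exact lt_trans h1 h2


end MergeAux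

open MergeAux

/-- Merging the sorted suffixes of the two parts of a Lyndon factorization:
sorting the positions of the first block by local-suffix order, the positions
of the second block by local-suffix order, and merging the two sorted lists by
global-suffix order yields the positions of `W` sorted by global-suffix
order. -/
theorem merge_sorted_suffixes {α : Type*} [LinearOrder α]
    (A B : List (List α)) (hA : A ≠ []) (hB : B ≠ [])
    (hLy : ∀ l ∈ A ++ B, IsLyndon l)
    (hchain : (A ++ B).Chain' (· ≥ ·)) :
    ((List.range (A ++ B).flatten.length).mergeSort
        (fun i j => decide ((A ++ B).flatten.drop i ≤ (A ++ B).flatten.drop j))) =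
      List.merge
        ((List.range A.flatten.length).mergeSort
          (fun i j => decide (A.flatten.drop i ≤ A.flatten.drop j)))
        ((List.range' A.flatten.length B.flatten.length).mergeSort
          (fun i j => decide (B.flatten.drop (i - A.flatten.length) ≤
            B.flatten.drop (j - A.flatten.length))))
        (fun i j => decide ((A ++ B).flatten.drop i ≤ (A ++ B).flatten.drop j)) := by
  classical
  have hLyA : ∀ l ∈ A, IsLyndon l := fun l hl => hLy l (by simp [hl])
  have hLyB : ∀ l ∈ B, IsLyndon l := fun l hl => hLy l (by simp [hl])
  haveI : IsTrans (List α) (· ≥ ·) := ⟨fun a b c h h' => le_trans h' h⟩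
  have hpair : (A ++ B).Pairwise (· ≥ ·) := List.isChain_iff_pairwise.1 hchain
  obtain ⟨hpairA, hpairB, hcross⟩ := List.pairwise_append.1 hpair
  set u := A.flatten with hu
  set v := B.flatten with hvdef
  have hW : (A ++ B).flatten = u ++ v := List.flatten_append
  set a := u.length with ha
  set b := v.length with hb
  have hv : v ≠ [] := by
    obtain ⟨c, B', rfl⟩ := List.exists_cons_of_ne_nil hB
    have : c ≠ [] := (hLyB c (by simp)).1
    simp [hvdef, this]
  have hcross' : ∀ x ∈ A, ∀ c ∈ B, c ≤ x := fun x hx c hc => hcross x hx c hc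
  -- compatibility
  have compat_lt : ∀ i j : ℕ, u.drop i < u.drop j → u.drop i ++ v < u.drop j ++ v := by
    intro i j h
    rcases lt_cases h with h' | ⟨hpre, hne⟩
    · exact h'.append_lt v v
    · obtain ⟨z, hz⟩ := hpre
      have hzne : z ≠ [] := by rintro rfl; exact hne (by simpa using hz)
      have hzsuf : z <:+ u := (show z <:+ u.drop j from ⟨u.drop i, hz⟩).trans (List.drop_suffix j u)
      have hkey : v < z ++ v := suffix_lt B hLyB hpairB A hLyA hpairA hcross' z hzsuf hzne
      rw [← hz, List.append_assoc, append_lt_append_left_iff]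
      exact hkey
  have compat_le : ∀ i j : ℕ, (u.drop i ≤ u.drop j ↔ u.drop i ++ v ≤ u.drop j ++ v) := by
    intro i j
    constructor
    · intro h
      rcases eq_or_lt_of_le h with he | hl
      · rw [he]
      · exact le_of_lt (compat_lt _ _ hl)
    · intro h
      by_contra hc
      push_neg at hc
      exact absurd h (not_le_of_gt (compat_lt _ _ hc))
  -- notation
  set W := (A ++ B).flatten with hWdef
  set n := W.length with hn
  have hnab : n = a + b := by rw [hn, hW, List.length_append]
  set leG : ℕ → ℕ → Bool := fun i j => decide (W.drop i ≤ W.drop j) with hleG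
  set leA : ℕ → ℕ → Bool := fun i j => decide (u.drop i ≤ u.drop j) with hleA
  set leB : ℕ → ℕ → Bool := fun i j => decide (v.drop (i - a) ≤ v.drop (j - a)) with hleB
  -- global drop identities
  have dropA : ∀ i : ℕ, i ≤ a → W.drop i = u.drop i ++ v := by
    intro i hi
    rw [hW]; exact List.drop_append_of_le_length hi
  have dropB : ∀ i : ℕ, a ≤ i → W.drop i = v.drop (i - a) := by
    intro i hi
    calc W.drop i = (u ++ v).drop (a + (i - a)) := by rw [hW]; congr 1; omega
      _ = v.drop (i - a) := List.drop_length_add_append _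
  -- transitivity and totality
  have htrans : ∀ x y z : ℕ, leG x y = true → leG y z = true → leG x z = true := by
    intro x y z
    simp only [hleG, decide_eq_true_eq]
    exact le_trans
  have htot : ∀ x y : ℕ, (leG x y || leG y x) = true := by
    intro x y
    simp only [hleG, Bool.or_eq_true, decide_eq_true_eq]
    exact le_total _ _
  have htransA : ∀ x y z : ℕ, leA x y = true → leA y z = true → leA x z = true := by
    intro x y z
    simp only [hleA, decide_eq_true_eq]
    exact le_trans
  have htotA : ∀ x y : ℕ, (leA x y || leA y x) = true := by
    intro x y
    simp only [hleA, Bool.or_eq_true, decide_eq_true_eq]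
    exact le_total _ _
  have htransB : ∀ x y z : ℕ, leB x y = true → leB y z = true → leB x z = true := by
    intro x y z
    simp only [hleB, decide_eq_true_eq]
    exact le_trans
  have htotB : ∀ x y : ℕ, (leB x y || leB y x) = true := by
    intro x y
    simp only [hleB, Bool.or_eq_true, decide_eq_true_eq]
    exact le_total _ _
  -- the strict global relation
  set r : ℕ → ℕ → Prop := fun i j => W.drop i < W.drop j with hr
  haveI : IsAntisymm ℕ r := ⟨fun x y h h' => absurd h' (lt_asymm h)⟩
  set L1 := (List.range n).mergeSort leG with hL1
  set S1 := (List.range a).mergeSort leA with hS1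
  set S2 := (List.range' a b).mergeSort leB with hS2
  set RHS := List.merge S1 S2 leG with hRHS
  -- permutations
  have permL1 : List.Perm L1 (List.range n) := List.mergeSort_perm _ _
  have permRHS : List.Perm RHS (List.range n) := by
    refine (List.merge_perm_append leG).trans ?_
    refine ((List.mergeSort_perm _ _).append (List.mergeSort_perm _ _)).trans ?_
    rw [hnab, List.range_eq_range', List.range_eq_range']
    exact List.Perm.of_eq (by simpa [Nat.add_comm] using List.range'_append (s := 0) (m := a) (n := b) (step := 1))
  -- upgrade pairwise ≤ to pairwise < on nodup lists of positions
  have strict_of : ∀ l : List ℕ, l.Pairwise (fun i j => leG i j = true) → List.Perm l (List.range n) →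
      l.Pairwise r := by
    intro l hle hperm
    have hnd : l.Pairwise (· ≠ ·) := hperm.nodup_iff.2 (List.nodup_range (n := n))
    refine (hle.and hnd).imp_of_mem ?_
    rintro x y hx hy ⟨hxy, hne⟩
    have hx' : x < n := List.mem_range.1 (hperm.mem_iff.1 hx)
    have hy' : y < n := List.mem_range.1 (hperm.mem_iff.1 hy)
    simp only [hleG, decide_eq_true_eq] at hxy
    refine lt_of_le_of_ne hxy ?_
    intro heq
    have := congrArg List.length heq
    rw [List.length_drop, List.length_drop] at this
    exact hne (by omega)
  -- sortedness
  have sortL1 : L1.Pairwise r :=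
    strict_of _ (List.pairwise_mergeSort htrans htot _) permL1
  have sortS1 : S1.Pairwise (fun i j => leG i j = true) := by
    refine (List.pairwise_mergeSort htransA htotA (List.range a)).imp_of_mem ?_
    intro x y hx hy hxy
    have hx' : x < a := List.mem_range.1 (List.mem_mergeSort.1 hx)
    have hy' : y < a := List.mem_range.1 (List.mem_mergeSort.1 hy)
    simp only [hleA, hleG, decide_eq_true_eq] at hxy ⊢
    rw [dropA x hx'.le, dropA y hy'.le]
    exact (compat_le x y).1 hxy
  have sortS2 : S2.Pairwise (fun i j => leG i j = true) := by
    refine (List.pairwise_mergeSort htransB htotB (List.range' a b)).imp_of_mem ?_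
    intro x y hx hy hxy
    have hx' : a ≤ x := (List.mem_range'_1.1 (List.mem_mergeSort.1 hx)).1
    have hy' : a ≤ y := (List.mem_range'_1.1 (List.mem_mergeSort.1 hy)).1
    simp only [hleB, hleG, decide_eq_true_eq] at hxy ⊢
    rw [dropB x hx', dropB y hy']
    exact hxy
  have sortRHS : RHS.Pairwise r := by
    refine strict_of _ ?_ permRHS
    exact List.pairwise_merge htrans htot S1 S2 sortS1 sortS2
  exact List.Perm.eq_of_pairwise' sortL1 sortRHS (permL1.trans permRHS.symm)
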